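/- arXiv:2402.01504 — 3 statements merged into one kernel-verified Lean document; each statement's English description precedes it below -/
import Mathlib

section
/- Let G be a locally profinite group, K ⊆ G a compact open subgroup, k a field, V a smooth k-linear representation of K, and U ⊆ G an open subgroup. Then the space of U-invariant vectors in the smooth induction Ind_K^G(V) is isomorphic to the inverse limit, over the groupoid whose objects are cosets x ∈ G/U with morphisms Hom(x,y) = {κ ∈ K : κx = y}, of the functor sending x to the fixed-point space V^{K ∩ xUx⁻¹} (with κ acting by v ↦ κv). -/
/-!
STATEMENT 0: For a locally profinite group `G`, a compact open subgroup `K`, a field `k`,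
a smooth `k`-linear representation `V` of `K` and an open subgroup `U ⊆ G`, the space of
`U`-invariants of the smooth induction `Ind_K^G(V)` is isomorphic to the limit, over the
action groupoid of `K` acting on `G/U`, of the functor `x ↦ V^{K ∩ xUx⁻¹}` (with `κ` acting
by `v ↦ κ • v`).
-/

section Core

variable (k G V : Type) [Field k] [Group G] [TopologicalSpace G]
  [AddCommGroup V] [Module k V]

/-- An action is *smooth* if every vector has an open subgroup of stabilizers. -/
def SmoothAct (G V : Type) [Group G] [TopologicalSpace G] [SMul G V] : Prop :=
  ∀ v : V, ∃ U : Subgroup G, IsOpen (U : Set G) ∧ ∀ u ∈ U, u • v = v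

variable (K : Subgroup G) [DistribMulAction ↥K V] [SMulCommClass ↥K k V]

/-- Smooth induction `Ind_K^G(V)`: functions `f : G → V` with `f (κ * g) = κ • f g` which
are invariant under right translation by some open subgroup. -/
def SmoothInd : Submodule k (G → V) where
  carrier := {f | (∀ (κ : K) (g : G), f ((κ : G) * g) = κ • f g) ∧
      ∃ U : Subgroup G, IsOpen (U : Set G) ∧ ∀ (g : G), ∀ u ∈ U, f (g * u) = f g}
  add_mem' := by
    rintro f g ⟨hf1, U1, hU1, hf2⟩ ⟨hg1, U2, hU2, hg2⟩
    refine ⟨fun κ x => by simp [hf1, hg1, smul_add], U1 ⊓ U2, ?_, ?_⟩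
    · simpa using hU1.inter hU2
    · rintro x u ⟨hu1, hu2⟩
      simp [hf2 x u hu1, hg2 x u hu2]
  zero_mem' := ⟨fun κ g => by simp, ⊤, by simpa using isOpen_univ, fun g u _ => rfl⟩
  smul_mem' := by
    rintro c f ⟨hf1, U1, hU1, hf2⟩
    exact ⟨fun κ x => by simp [hf1, smul_comm], U1, hU1, fun g u hu => by simp [hf2 g u hu]⟩

/-- The `U`-invariants of `Ind_K^G(V)` (for the right translation action of `G`). -/
def SmoothIndInv (U : Subgroup G) : Submodule k (G → V) where
  carrier := {f | f ∈ SmoothInd k G V K ∧ ∀ (g : G), ∀ u ∈ U, f (g * u) = f g}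
  add_mem' := by
    rintro f g ⟨hf, hf2⟩ ⟨hg, hg2⟩
    exact ⟨add_mem hf hg, fun x u hu => by simp [hf2 x u hu, hg2 x u hu]⟩
  zero_mem' := ⟨zero_mem _, fun g u _ => rfl⟩
  smul_mem' := by
    rintro c f ⟨hf, hf2⟩
    exact ⟨Submodule.smul_mem _ c hf, fun g u hu => by simp [hf2 g u hu]⟩

/-- The limit of the functor `x ↦ V^{K ∩ xUx⁻¹}` over the action groupoid `K ↷ G/U`:
families `c`, constant on cosets `xU` (i.e. functions on `G/U`), with
`c x ∈ V^{K ∩ xUx⁻¹}` and `c (κ x) = κ • c x` (the structure isomorphisms of the functor). -/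
def GroupoidLimit (U : Subgroup G) : Submodule k (G → V) where
  carrier := {c | (∀ (x : G), ∀ u ∈ U, c (x * u) = c x) ∧
      (∀ (x : G) (κ : K), (∃ u ∈ U, (κ : G) = x * u * x⁻¹) → κ • c x = c x) ∧
      (∀ (κ : K) (x : G), c ((κ : G) * x) = κ • c x)}
  add_mem' := by
    rintro f g ⟨hf1, hf2, hf3⟩ ⟨hg1, hg2, hg3⟩
    exact ⟨fun x u hu => by simp [hf1 x u hu, hg1 x u hu],
      fun x κ h => by simp [smul_add, hf2 x κ h, hg2 x κ h],
      fun κ x => by simp [hf3, hg3, smul_add]⟩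
  zero_mem' := ⟨fun x u _ => rfl, fun x κ _ => by simp, fun κ x => by simp⟩
  smul_mem' := by
    rintro c f ⟨hf1, hf2, hf3⟩
    exact ⟨fun x u hu => by simp [hf1 x u hu],
      fun x κ h => by simp [smul_comm, hf2 x κ h],
      fun κ x => by simp [hf3, smul_comm]⟩

end Core

theorem statement0 (k G V : Type) [Field k] [Group G] [TopologicalSpace G]
    [IsTopologicalGroup G] [LocallyCompactSpace G] [TotallyDisconnectedSpace G] [T2Space G]
    [AddCommGroup V] [Module k V]
    (K : Subgroup G) [DistribMulAction ↥K V] [SMulCommClass ↥K k V]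
    (hKopen : IsOpen (K : Set G)) (hKcomp : IsCompact (K : Set G))
    (hV : SmoothAct ↥K V)
    (U : Subgroup G) (hUopen : IsOpen (U : Set G)) :
    Nonempty ((SmoothIndInv k G V K U) ≃ₗ[k] (GroupoidLimit k G V K U)) := by
  refine ⟨LinearEquiv.ofEq _ _ ?_⟩
  ext f
  constructor
  · rintro ⟨⟨hK, -⟩, hU⟩
    refine ⟨hU, ?_, hK⟩
    rintro x κ ⟨u, hu, hκ⟩
    rw [← hK κ x, hκ]
    rw [show x * u * x⁻¹ * x = x * u by group, hU x u hu]
  · rintro ⟨hU, -, hK⟩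
    exact ⟨⟨hK, U, hUopen, hU⟩, hU⟩
end

section
/- Let G be a locally profinite group and K ⊆ G a compact open subgroup. If R ⊆ G is a set of representatives for the double cosets K\G/U for an open subgroup U ⊆ G, then evaluation f ↦ (f(x))_{x∈R} gives a k-linear isomorphism Ind_K^G(V)^U ≅ ∏_{x∈R} V^{K ∩ xUx⁻¹} for any smooth k-representation V of K. -/
theorem statement1 (k G V : Type) [Field k] [Group G] [TopologicalSpace G]
    [IsTopologicalGroup G] [LocallyCompactSpace G] [TotallyDisconnectedSpace G] [T2Space G]
    [AddCommGroup V] [Module k V]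
    (K : Subgroup G) [DistribMulAction ↥K V] [SMulCommClass ↥K k V]
    (hKopen : IsOpen (K : Set G)) (hKcomp : IsCompact (K : Set G))
    (hV : SmoothAct ↥K V)
    (U : Subgroup G) (hUopen : IsOpen (U : Set G))
    (R : Set G)
    -- `R` is a set of representatives for the double cosets `K\G/U`:
    (hRex : ∀ g : G, ∃ x ∈ R, ∃ κ ∈ K, ∃ u ∈ U, g = κ * x * u)
    (hRuniq : ∀ x ∈ R, ∀ y ∈ R, (∃ κ ∈ K, ∃ u ∈ U, y = κ * x * u) → x = y) :
    -- the evaluation map `f ↦ (f x)_{x ∈ R}`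
    Function.Injective
        (fun (f : SmoothIndInv k G V K U) (x : R) => (f : G → V) x) ∧
    Set.range (fun (f : SmoothIndInv k G V K U) (x : R) => (f : G → V) x) =
      {c : R → V | ∀ (x : R) (κ : K),
        (∃ u ∈ U, (κ : G) = (x : G) * u * (x : G)⁻¹) → κ • c x = c x} ∧
    (∀ f g : SmoothIndInv k G V K U, ∀ x : R,
      ((f + g : SmoothIndInv k G V K U) : G → V) x = (f : G → V) x + (g : G → V) x) ∧
    (∀ (t : k) (f : SmoothIndInv k G V K U), ∀ x : R,
      ((t • f : SmoothIndInv k G V K U) : G → V) x = t • (f : G → V) x) := by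
  classical
  refine ⟨?_, ?_, fun f g x => rfl, fun t f x => rfl⟩
  · -- injectivity
    rintro ⟨f, ⟨hf1, hf2⟩, hf3⟩ ⟨g, ⟨hg1, hg2⟩, hg3⟩ h
    apply Subtype.ext
    funext y
    obtain ⟨x, hx, κ, hκ, u, hu, rfl⟩ := hRex y
    have hx' : f x = g x := congrFun h ⟨x, hx⟩
    calc f (κ * x * u) = f (κ * (x * u)) := by rw [mul_assoc]
      _ = (⟨κ, hκ⟩ : K) • f (x * u) := hf1 ⟨κ, hκ⟩ (x * u)
      _ = (⟨κ, hκ⟩ : K) • f x := by rw [hf3 x u hu]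
      _ = (⟨κ, hκ⟩ : K) • g x := by rw [hx']
      _ = (⟨κ, hκ⟩ : K) • g (x * u) := by rw [hg3 x u hu]
      _ = g (κ * (x * u)) := (hg1 ⟨κ, hκ⟩ (x * u)).symm
      _ = g (κ * x * u) := by rw [mul_assoc]
  · -- range
    ext c
    simp only [Set.mem_range, Set.mem_setOf_eq]
    constructor
    · rintro ⟨⟨f, ⟨hf1, hf2⟩, hf3⟩, rfl⟩
      rintro x κ ⟨u, hu, hκeq⟩
      show κ • f x = f x
      calc κ • f (x : G) = f ((κ : G) * x) := (hf1 κ x).symm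
        _ = f ((x : G) * u) := by rw [hκeq]; group
        _ = f x := hf3 _ u hu
    · intro hc
      choose x hxR κ hκK u huU hdec using hRex
      have key : ∀ (g : G) (x' : G) (hx' : x' ∈ R) (κ' : G) (hκ' : κ' ∈ K)
          (u' : G), u' ∈ U → g = κ' * x' * u' →
          (⟨κ g, hκK g⟩ : K) • c ⟨x g, hxR g⟩ = (⟨κ', hκ'⟩ : K) • c ⟨x', hx'⟩ := by
        intro g x' hx' κ' hκ' u' hu' heq
        have h : κ' * x' * u' = κ g * x g * u g := heq.symm.trans (hdec g)
        have hxx : x g = x' := by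
          apply hRuniq (x g) (hxR g) x' hx'
          refine ⟨κ'⁻¹ * κ g, mul_mem (inv_mem hκ') (hκK g), u g * u'⁻¹,
            mul_mem (huU g) (inv_mem hu'), ?_⟩
          calc x' = κ'⁻¹ * (κ' * x' * u') * u'⁻¹ := by group
            _ = κ'⁻¹ * (κ g * x g * u g) * u'⁻¹ := by rw [h]
            _ = κ'⁻¹ * κ g * (x g) * (u g * u'⁻¹) := by group
        subst hxx
        have hκrel : κ'⁻¹ * κ g = x g * (u' * (u g)⁻¹) * (x g)⁻¹ := by
          calc κ'⁻¹ * κ g = κ'⁻¹ * (κ g * x g * u g) * (u g)⁻¹ * (x g)⁻¹ := by group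
            _ = κ'⁻¹ * (κ' * x g * u') * (u g)⁻¹ * (x g)⁻¹ := by rw [h]
            _ = x g * (u' * (u g)⁻¹) * (x g)⁻¹ := by group
        have hcfix := hc ⟨x g, hxR g⟩
          ⟨κ'⁻¹ * κ g, mul_mem (inv_mem hκ') (hκK g)⟩
          ⟨u' * (u g)⁻¹, mul_mem hu' (inv_mem (huU g)), hκrel⟩
        have hmul : (⟨κ', hκ'⟩ : K) * ⟨κ'⁻¹ * κ g, mul_mem (inv_mem hκ') (hκK g)⟩
            = ⟨κ g, hκK g⟩ := by
          apply Subtype.ext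
          show κ' * (κ'⁻¹ * κ g) = κ g
          group
        calc (⟨κ g, hκK g⟩ : K) • c ⟨x g, hxR g⟩
            = ((⟨κ', hκ'⟩ : K) * ⟨κ'⁻¹ * κ g, mul_mem (inv_mem hκ') (hκK g)⟩) •
              c ⟨x g, hxR g⟩ := by rw [hmul]
          _ = (⟨κ', hκ'⟩ : K) • ((⟨κ'⁻¹ * κ g, mul_mem (inv_mem hκ') (hκK g)⟩ : K) •
              c ⟨x g, hxR g⟩) := mul_smul _ _ _
          _ = (⟨κ', hκ'⟩ : K) • c ⟨x g, hxR g⟩ := by rw [hcfix]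
      set F : G → V := fun g => (⟨κ g, hκK g⟩ : K) • c ⟨x g, hxR g⟩ with hF
      have hUinv : ∀ (g : G), ∀ u₀ ∈ U, F (g * u₀) = F g := by
        intro g u₀ hu₀
        exact key (g * u₀) (x g) (hxR g) (κ g) (hκK g) (u g * u₀)
          (mul_mem (huU g) hu₀)
          (by conv_lhs => rw [hdec g]
              group)
      refine ⟨⟨F, ⟨?_, U, hUopen, hUinv⟩, hUinv⟩, ?_⟩
      · intro κ₀ g
        have hk := key ((κ₀ : G) * g) (x g) (hxR g) ((κ₀ : G) * κ g)
          (mul_mem κ₀.2 (hκK g)) (u g) (huU g)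
          (by conv_lhs => rw [hdec g]
              group)
        show (⟨κ ((κ₀:G) * g), hκK _⟩ : K) • c ⟨x ((κ₀:G) * g), hxR _⟩ = κ₀ • F g
        rw [hk]
        have hm : (⟨(κ₀ : G) * κ g, mul_mem κ₀.2 (hκK g)⟩ : K)
            = κ₀ * ⟨κ g, hκK g⟩ := rfl
        rw [hm, mul_smul]
      · funext x₀
        have hk := key (x₀ : G) (x₀ : G) x₀.2 1 (one_mem K) 1 (one_mem U) (by group)
        show (⟨κ (x₀:G), hκK _⟩ : K) • c ⟨x (x₀:G), hxR _⟩ = c x₀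
        rw [hk]
        have h1 : (⟨(1 : G), one_mem K⟩ : K) = 1 := rfl
        rw [h1, one_smul]
end

section
/- Let G be a locally profinite group, K ⊆ G compact open, k a field. For V a smooth k-representation of K and W a smooth k-representation of G, there is a natural isomorphism of smooth G-representations Ind_K^G(Hom_sm(V, W|_K)) ≅ Hom_sm(ind_K^G V, W), where Hom_sm denotes the space of smooth k-linear maps (the smooth vectors of the Hom-space). -/
/-!
STATEMENT 2: For a smooth `k`-representation `V` of a compact open subgroup `K` of a
locally profinite group `G` and a smooth `k`-representation `W` of `G` there is a natural
isomorphism of smooth `G`-representations `Ind_K^G (Hom_sm(V, W|_K)) ≅ Hom_sm(ind_K^G V, W)`.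
-/

section Core

variable (k G V W : Type) [Field k] [Group G] [TopologicalSpace G] [IsTopologicalGroup G]
  [AddCommGroup V] [Module k V] [AddCommGroup W] [Module k W]

variable (K : Subgroup G) [DistribMulAction ↥K V] [SMulCommClass ↥K k V]
  [DistribMulAction G W] [SMulCommClass G k W]

/-- The conjugation action of `κ ∈ K` on `k`-linear maps `V → W`:
`(κ ⋅ f)(v) = κ • f (κ⁻¹ • v)`. -/
def homAct (κ : ↥K) (f : V → W) : V → W := fun v => ((κ : G) • f (κ⁻¹ • v) : W)

/-- `Hom_sm(V, W|_K)`: the smooth vectors for the `K`-action on `Hom_k(V,W)`. -/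
def SmoothHom : Submodule k (V → W) where
  carrier := {f | IsLinearMap k f ∧ ∃ U : Subgroup G, IsOpen (U : Set G) ∧
      ∀ κ : ↥K, (κ : G) ∈ U → homAct G V W K κ f = f}
  add_mem' := by
    rintro f g ⟨hf1, U1, hU1, hf2⟩ ⟨hg1, U2, hU2, hg2⟩
    refine ⟨⟨fun a b => by simp [hf1.map_add, hg1.map_add, add_add_add_comm],
        fun c a => by simp [hf1.map_smul, hg1.map_smul]⟩, U1 ⊓ U2, ?_, ?_⟩
    · simpa using hU1.inter hU2
    · rintro κ ⟨h1, h2⟩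
      have e1 := hf2 κ h1; have e2 := hg2 κ h2
      funext v
      simpa [homAct, smul_add] using congrFun (congrArg₂ (· + ·) e1 e2) v
  zero_mem' := ⟨⟨fun a b => by simp, fun c a => by simp⟩, ⊤, by simpa using isOpen_univ,
      fun κ _ => by funext v; simp [homAct]⟩
  smul_mem' := by
    rintro c f ⟨hf1, U1, hU1, hf2⟩
    refine ⟨⟨fun a b => by simp [hf1.map_add, smul_add], fun t a => by
        simp only [Pi.smul_apply, hf1.map_smul]
        exact smul_comm c t (f a)⟩, U1, hU1, fun κ hκ => ?_⟩
    have := hf2 κ hκ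
    funext v
    simpa [homAct, smul_comm] using congrArg (fun y => c • y) (congrFun this v)

end Core

section Core2

variable (k G V W : Type) [Field k] [Group G] [TopologicalSpace G] [IsTopologicalGroup G]
  [AddCommGroup V] [Module k V] [AddCommGroup W] [Module k W]
  (K : Subgroup G) [DistribMulAction ↥K V] [SMulCommClass ↥K k V]
  [DistribMulAction G W] [SMulCommClass G k W]

/-- `Ind_K^G(Hom_sm(V, W|_K))`: functions `F : G → Hom_sm(V,W|_K)` with
`F (κ g) = κ ⋅ F g`, invariant under right translation by some open subgroup. -/
def IndSmoothHom : Submodule k (G → (V → W)) where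
  carrier := {F | (∀ g : G, F g ∈ SmoothHom k G V W K) ∧
      (∀ (κ : ↥K) (g : G), F ((κ : G) * g) = homAct G V W K κ (F g)) ∧
      ∃ U : Subgroup G, IsOpen (U : Set G) ∧ ∀ (g : G), ∀ u ∈ U, F (g * u) = F g}
  add_mem' := by
    rintro F F' ⟨hF0, hF1, U1, hU1, hF2⟩ ⟨hF0', hF1', U2, hU2, hF2'⟩
    refine ⟨fun g => add_mem (hF0 g) (hF0' g), fun κ g => ?_, U1 ⊓ U2, ?_, ?_⟩
    · funext v; simp [hF1 κ g, hF1' κ g, homAct, smul_add]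
    · simpa using hU1.inter hU2
    · rintro g u ⟨hu1, hu2⟩
      simp [hF2 g u hu1, hF2' g u hu2]
  zero_mem' := ⟨fun g => zero_mem _, fun κ g => by funext v; simp [homAct],
      ⊤, by simpa using isOpen_univ, fun g u _ => rfl⟩
  smul_mem' := by
    rintro c F ⟨hF0, hF1, U1, hU1, hF2⟩
    refine ⟨fun g => Submodule.smul_mem _ c (hF0 g), fun κ g => ?_, U1, hU1,
      fun g u hu => by simp [hF2 g u hu]⟩
    funext v
    simp only [Pi.smul_apply, hF1 κ g, homAct]
    exact (smul_comm ((κ : G)) c _).symm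

/-- Compact induction `ind_K^G(V)`. -/
def CompactIndK : Submodule k (G → V) where
  carrier := {f | (∀ (κ : ↥K) (g : G), f ((κ : G) * g) = κ • f g) ∧
      (∃ U : Subgroup G, IsOpen (U : Set G) ∧ ∀ (g : G), ∀ u ∈ U, f (g * u) = f g) ∧
      ∃ S : Finset G, ∀ g : G, f g ≠ 0 → ∃ s ∈ S, ∃ κ ∈ K, g = κ * s}
  add_mem' := by
    classical
    rintro f g ⟨hf1, ⟨U1, hU1, hf2⟩, Sf, hSf⟩ ⟨hg1, ⟨U2, hU2, hg2⟩, Sg, hSg⟩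
    refine ⟨fun κ x => by simp [hf1, hg1, smul_add], ⟨U1 ⊓ U2, by
        simpa using hU1.inter hU2, ?_⟩, Sf ∪ Sg, fun x hx => ?_⟩
    · rintro x u ⟨hu1, hu2⟩
      simp [hf2 x u hu1, hg2 x u hu2]
    · by_cases h1 : f x = 0
      · rcases hSg x (by simpa [h1] using hx) with ⟨s, hs, hk⟩
        exact ⟨s, Finset.mem_union_right _ hs, hk⟩
      · rcases hSf x h1 with ⟨s, hs, hk⟩
        exact ⟨s, Finset.mem_union_left _ hs, hk⟩
  zero_mem' := ⟨fun κ g => by simp, ⟨⊤, by simpa using isOpen_univ, fun g u _ => rfl⟩,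
      ∅, fun g hg => absurd rfl hg⟩
  smul_mem' := by
    rintro c f ⟨hf1, ⟨U1, hU1, hf2⟩, Sf, hSf⟩
    refine ⟨fun κ x => by simp [hf1, smul_comm], ⟨U1, hU1, fun g u hu => by
        simp [hf2 g u hu]⟩, Sf, fun x hx => hSf x fun h => ?_⟩
    simp [h] at hx

/-- Right translation by `g` on `ind_K^G(V)`. -/
def rtK (g : G) (f : ↥(CompactIndK k G V K)) : ↥(CompactIndK k G V K) := by
  classical
  refine ⟨fun h => (f : G → V) (h * g), ?_, ?_, ?_⟩
  · rcases f.2 with ⟨h1, _, _⟩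
    intro κ x
    simpa [mul_assoc] using h1 κ (x * g)
  · rcases f.2 with ⟨_, ⟨U, hU, h2⟩, _⟩
    refine ⟨Subgroup.map (MulAut.conj g).toMonoidHom U, ?_, ?_⟩
    · have : ((Subgroup.map (MulAut.conj g).toMonoidHom U : Subgroup G) : Set G) =
          (fun x => g * x * g⁻¹) '' (U : Set G) := by
        ext x; simp [MulAut.conj_apply]
      rw [this]
      have hmap : IsOpenMap (fun x : G => g * x * g⁻¹) := by
        have h1 : IsOpenMap (fun x : G => x * g⁻¹) := (Homeomorph.mulRight g⁻¹).isOpenMap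
        have h2 : IsOpenMap (fun x : G => g * x) := (Homeomorph.mulLeft g).isOpenMap
        have := h2.comp h1
        convert this using 1
        funext x
        simp [mul_assoc]
      exact hmap _ hU
    · rintro x u hu
      rcases Subgroup.mem_map.mp hu with ⟨u₀, hu₀, rfl⟩
      show (f : G → V) (x * (MulAut.conj g).toMonoidHom u₀ * g) = (f : G → V) (x * g)
      have e : x * (MulAut.conj g).toMonoidHom u₀ * g = (x * g) * u₀ := by
        simp [MulAut.conj_apply]; group
      rw [e, h2 (x * g) u₀ hu₀]
  · rcases f.2 with ⟨_, _, S, hS⟩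
    refine ⟨S.image (fun s => s * g⁻¹), fun x hx => ?_⟩
    rcases hS (x * g) hx with ⟨s, hs, κ, hκ, hxg⟩
    refine ⟨s * g⁻¹, Finset.mem_image_of_mem _ hs, κ, hκ, ?_⟩
    have : x = κ * s * g⁻¹ := by
      rw [← hxg]; group
    simpa [mul_assoc] using this

/-- The `G`-action on maps `ind_K^G(V) → W`: `(g ⋅ φ)(f) = g • φ (g⁻¹ ⋅ f)`. -/
def indAct (g : G) (φ : ↥(CompactIndK k G V K) → W) : ↥(CompactIndK k G V K) → W :=
  fun f => g • φ (rtK k G V K g⁻¹ f)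

/-- `Hom_sm(ind_K^G V, W)`: the smooth vectors of `Hom_k(ind_K^G V, W)`. -/
def SmoothHomInd : Submodule k (↥(CompactIndK k G V K) → W) where
  carrier := {φ | IsLinearMap k φ ∧ ∃ U : Subgroup G, IsOpen (U : Set G) ∧
      ∀ g ∈ U, indAct k G V W K g φ = φ}
  add_mem' := by
    rintro φ ψ ⟨hφ1, U1, hU1, hφ2⟩ ⟨hψ1, U2, hU2, hψ2⟩
    refine ⟨⟨fun a b => by simp [hφ1.map_add, hψ1.map_add, add_add_add_comm],
        fun c a => by simp [hφ1.map_smul, hψ1.map_smul]⟩, U1 ⊓ U2, ?_, ?_⟩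
    · simpa using hU1.inter hU2
    · rintro g ⟨h1, h2⟩
      funext f
      simpa [indAct, smul_add] using
        congrFun (congrArg₂ (· + ·) (hφ2 g h1) (hψ2 g h2)) f
  zero_mem' := ⟨⟨fun a b => by simp, fun c a => by simp⟩, ⊤, by simpa using isOpen_univ,
      fun g _ => by funext f; simp [indAct]⟩
  smul_mem' := by
    rintro c φ ⟨hφ1, U1, hU1, hφ2⟩
    refine ⟨⟨fun a b => by simp [hφ1.map_add, smul_add], fun t a => by
        simp only [Pi.smul_apply, hφ1.map_smul]
        exact smul_comm c t (φ a)⟩, U1, hU1, fun g hg => ?_⟩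
    funext f
    simpa [indAct, smul_comm] using congrArg (fun y => c • y) (congrFun (hφ2 g hg) f)

end Core2



section IsoAux

open Function

variable (k G V W : Type) [Field k] [Group G] [TopologicalSpace G] [IsTopologicalGroup G]
  [AddCommGroup V] [Module k V] [AddCommGroup W] [Module k W]
  (K : Subgroup G) [DistribMulAction ↥K V] [SMulCommClass ↥K k V]
  [DistribMulAction G W] [SMulCommClass G k W]

abbrev QuotK := Quotient (QuotientGroup.rightRel K)

abbrev mkQ (g : G) : QuotK G K := Quotient.mk (QuotientGroup.rightRel K) g

lemma mkQ_out (q : QuotK G K) : mkQ G K q.out = q := q.out_eq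

lemma mkQ_rel (g : G) : g * (mkQ G K g).out⁻¹ ∈ K := by
  have := Quotient.mk_out (s := QuotientGroup.rightRel K) g
  rwa [QuotientGroup.rightRel_apply] at this

lemma mkQ_eq_of_mem {g h : G} (hm : h * g⁻¹ ∈ K) : mkQ G K g = mkQ G K h :=
  Quotient.sound (QuotientGroup.rightRel_apply.mpr hm)

lemma notin_of_ne {x : G} {q : QuotK G K} (hq : q ≠ mkQ G K x) : x * q.out⁻¹ ∉ K := fun hc =>
  hq ((mkQ_out G K q).symm.trans (mkQ_eq_of_mem G K hc))

lemma out_notin_of_ne {g : G} {q : QuotK G K} (hq : q ≠ mkQ G K g) : q.out * g⁻¹ ∉ K := fun hc =>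
  hq ((mkQ_out G K q).symm.trans ((mkQ_eq_of_mem G K hc).symm))

noncomputable def Tbar (F : G → V → W) (f : G → V) : QuotK G K → W :=
  fun q => q.out⁻¹ • F q.out (f q.out)

lemma Tbar_mk (F : G → V → W) (f : G → V)
    (hF : ∀ (κ : ↥K) (x : G), F ((κ : G) * x) = homAct G V W K κ (F x))
    (hf : ∀ (κ : ↥K) (x : G), f ((κ : G) * x) = κ • f x) (g : G) :
    Tbar G V W K F f (mkQ G K g) = g⁻¹ • F g (f g) := by
  have hrel := mkQ_rel G K g
  set o := (mkQ G K g).out with ho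
  set κ : ↥K := ⟨g * o⁻¹, hrel⟩ with hκ
  have hg : (κ : G) * o = g := by
    show g * o⁻¹ * o = g
    group
  have h1 : F g (f g) = (κ : G) • F o (f o) := by
    rw [← hg, hF κ o, hf κ o]
    show (κ : G) • F o (κ⁻¹ • κ • f o) = (κ : G) • F o (f o)
    rw [inv_smul_smul]
  show o⁻¹ • F o (f o) = g⁻¹ • F g (f g)
  rw [h1, ← mul_smul]
  congr 1
  rw [← hg, mul_inv_rev]
  group

lemma Tbar_finite (F : G → V → W) (f : G → V) (hF0 : ∀ x : G, F x 0 = 0)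
    (S : Finset G) (hS : ∀ x : G, f x ≠ 0 → ∃ s ∈ S, ∃ κ ∈ K, x = κ * s) :
    (Function.support (Tbar G V W K F f)).Finite := by
  apply Set.Finite.subset (S.finite_toSet.image (mkQ G K))
  intro q hq
  have hfq : f q.out ≠ 0 := by
    intro h
    apply hq
    show q.out⁻¹ • F q.out (f q.out) = 0
    rw [h, hF0, smul_zero]
  obtain ⟨s, hs, κ, hκ, he⟩ := hS q.out hfq
  refine ⟨s, hs, (mkQ_eq_of_mem G K ?_).trans (mkQ_out G K q)⟩
  rw [he]
  simpa using hκ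

lemma IndSmooth.lin {F : G → V → W} (hF : F ∈ IndSmoothHom k G V W K) (x : G) :
    IsLinearMap k (F x) := by
  obtain ⟨h0, -, -⟩ := hF
  obtain ⟨h, -⟩ := h0 x
  exact h

lemma IndSmooth.equiv {F : G → V → W} (hF : F ∈ IndSmoothHom k G V W K) :
    ∀ (κ : ↥K) (x : G), F ((κ : G) * x) = homAct G V W K κ (F x) := by
  obtain ⟨-, h, -⟩ := hF; exact h

lemma CompInd.equiv {f : G → V} (hf : f ∈ CompactIndK k G V K) :
    ∀ (κ : ↥K) (x : G), f ((κ : G) * x) = κ • f x := by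
  obtain ⟨h, -, -⟩ := hf; exact h

lemma CompInd.supp {f : G → V} (hf : f ∈ CompactIndK k G V K) :
    ∃ S : Finset G, ∀ x : G, f x ≠ 0 → ∃ s ∈ S, ∃ κ ∈ K, x = κ * s := by
  obtain ⟨-, -, h⟩ := hf; exact h

lemma Tbar_finite' (F : ↥(IndSmoothHom k G V W K)) (f : ↥(CompactIndK k G V K)) :
    (Function.support (Tbar G V W K (F : G → V → W) (f : G → V))).Finite := by
  obtain ⟨S, hS⟩ := CompInd.supp k G V K f.2
  exact Tbar_finite G V W K _ _ (fun x => (IndSmooth.lin k G V W K F.2 x).map_zero) S hS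

noncomputable def PhiVal (F : ↥(IndSmoothHom k G V W K)) (f : ↥(CompactIndK k G V K)) : W :=
  ∑ᶠ q, Tbar G V W K (F : G → V → W) (f : G → V) q

lemma PhiVal_add_f (F : ↥(IndSmoothHom k G V W K)) (f f' : ↥(CompactIndK k G V K)) :
    PhiVal k G V W K F (f + f') = PhiVal k G V W K F f + PhiVal k G V W K F f' := by
  unfold PhiVal
  rw [← finsum_add_distrib (Tbar_finite' k G V W K F f) (Tbar_finite' k G V W K F f')]
  apply finsum_congr
  intro q
  show q.out⁻¹ • (F : G → V → W) q.out (((f + f' : ↥(CompactIndK k G V K)) : G → V) q.out)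
      = _
  have h : ((f + f' : ↥(CompactIndK k G V K)) : G → V) q.out
      = (f : G → V) q.out + (f' : G → V) q.out := rfl
  rw [h, (IndSmooth.lin k G V W K F.2 q.out).map_add, smul_add]
  rfl

lemma PhiVal_smul_f (F : ↥(IndSmoothHom k G V W K)) (c : k) (f : ↥(CompactIndK k G V K)) :
    PhiVal k G V W K F (c • f) = c • PhiVal k G V W K F f := by
  unfold PhiVal
  rw [smul_finsum' c (Tbar_finite' k G V W K F f)]
  apply finsum_congr
  intro q
  show q.out⁻¹ • (F : G → V → W) q.out (((c • f : ↥(CompactIndK k G V K)) : G → V) q.out)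
      = c • (q.out⁻¹ • (F : G → V → W) q.out ((f : G → V) q.out))
  have h : ((c • f : ↥(CompactIndK k G V K)) : G → V) q.out = c • (f : G → V) q.out := rfl
  rw [h, (IndSmooth.lin k G V W K F.2 q.out).map_smul]
  exact smul_comm _ c _

lemma PhiVal_add_F (F F' : ↥(IndSmoothHom k G V W K)) (f : ↥(CompactIndK k G V K)) :
    PhiVal k G V W K (F + F') f = PhiVal k G V W K F f + PhiVal k G V W K F' f := by
  unfold PhiVal
  rw [← finsum_add_distrib (Tbar_finite' k G V W K F f) (Tbar_finite' k G V W K F' f)]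
  apply finsum_congr
  intro q
  show q.out⁻¹ • (((F + F' : ↥(IndSmoothHom k G V W K)) : G → V → W) q.out) ((f : G → V) q.out)
      = _
  have h : ((F + F' : ↥(IndSmoothHom k G V W K)) : G → V → W) q.out ((f : G → V) q.out)
      = (F : G → V → W) q.out ((f : G → V) q.out) + (F' : G → V → W) q.out ((f : G → V) q.out) :=
    rfl
  rw [h, smul_add]
  rfl

lemma PhiVal_smul_F (c : k) (F : ↥(IndSmoothHom k G V W K)) (f : ↥(CompactIndK k G V K)) :
    PhiVal k G V W K (c • F) f = c • PhiVal k G V W K F f := by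
  unfold PhiVal
  rw [smul_finsum' c (Tbar_finite' k G V W K F f)]
  apply finsum_congr
  intro q
  show q.out⁻¹ • (((c • F : ↥(IndSmoothHom k G V W K)) : G → V → W) q.out) ((f : G → V) q.out)
      = c • (q.out⁻¹ • (F : G → V → W) q.out ((f : G → V) q.out))
  have h : ((c • F : ↥(IndSmoothHom k G V W K)) : G → V → W) q.out ((f : G → V) q.out)
      = c • ((F : G → V → W) q.out ((f : G → V) q.out)) := rfl
  rw [h]
  exact smul_comm _ c _

noncomputable def rmulEquiv (g : G) : QuotK G K ≃ QuotK G K where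
  toFun := Quotient.lift (fun x => mkQ G K (x * g)) (by
    intro a b hab
    have hab' : b * a⁻¹ ∈ K := QuotientGroup.rightRel_apply.mp hab
    apply Quotient.sound
    apply QuotientGroup.rightRel_apply.mpr
    have e : b * g * (a * g)⁻¹ = b * a⁻¹ := by group
    rwa [e])
  invFun := Quotient.lift (fun x => mkQ G K (x * g⁻¹)) (by
    intro a b hab
    have hab' : b * a⁻¹ ∈ K := QuotientGroup.rightRel_apply.mp hab
    apply Quotient.sound
    apply QuotientGroup.rightRel_apply.mpr
    have e : b * g⁻¹ * (a * g⁻¹)⁻¹ = b * a⁻¹ := by group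
    rwa [e])
  left_inv := fun q => Quotient.inductionOn q (fun a => by
    show mkQ G K (a * g * g⁻¹) = mkQ G K a
    rw [mul_inv_cancel_right])
  right_inv := fun q => Quotient.inductionOn q (fun a => by
    show mkQ G K (a * g⁻¹ * g) = mkQ G K a
    rw [inv_mul_cancel_right])

lemma rtK_coe (g : G) (f : ↥(CompactIndK k G V K)) :
    ((rtK k G V K g f : ↥(CompactIndK k G V K)) : G → V) = fun h => (f : G → V) (h * g) := rfl

lemma PhiVal_translate (F F' : ↥(IndSmoothHom k G V W K)) (g : G)
    (h : (F' : G → V → W) = fun x => (F : G → V → W) (x * g)) (f : ↥(CompactIndK k G V K)) :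
    PhiVal k G V W K F' f = indAct k G V W K g (PhiVal k G V W K F) f := by
  set rf := rtK k G V K g⁻¹ f with hrf
  show PhiVal k G V W K F' f = g • PhiVal k G V W K F rf
  unfold PhiVal
  rw [show (g • ∑ᶠ (q : QuotK G K), Tbar G V W K (F : G → V → W) (rf : G → V) q)
      = ∑ᶠ (q : QuotK G K), g • Tbar G V W K (F : G → V → W) (rf : G → V) q from
    (DistribMulAction.toAddMonoidHom W g).map_finsum (Tbar_finite' k G V W K F rf)]
  rw [show (∑ᶠ (q : QuotK G K), g • Tbar G V W K (F : G → V → W) (rf : G → V) q)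
      = ∑ᶠ (q : QuotK G K), g • Tbar G V W K (F : G → V → W) (rf : G → V) (rmulEquiv G K g q) from
    (finsum_comp_equiv (rmulEquiv G K g)).symm]
  apply finsum_congr
  intro q
  show Tbar G V W K (F' : G → V → W) (f : G → V) q
      = g • Tbar G V W K (F : G → V → W) (rf : G → V) (rmulEquiv G K g q)
  have hq : rmulEquiv G K g q = mkQ G K (q.out * g) := by
    conv_lhs => rw [← mkQ_out G K q]
    rfl
  rw [hq, Tbar_mk G V W K _ _ (IndSmooth.equiv k G V W K F.2) (CompInd.equiv k G V K rf.2)]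
  have h1 : (rf : G → V) (q.out * g) = (f : G → V) q.out := by
    rw [hrf, rtK_coe]
    show (f : G → V) (q.out * g * g⁻¹) = (f : G → V) q.out
    rw [mul_inv_cancel_right]
  rw [h1, ← mul_smul]
  show q.out⁻¹ • (F' : G → V → W) q.out ((f : G → V) q.out) = _
  rw [h]
  congr 1
  rw [mul_inv_rev]
  group

lemma PhiVal_mem (F : ↥(IndSmoothHom k G V W K)) :
    PhiVal k G V W K F ∈ SmoothHomInd k G V W K := by
  obtain ⟨hF0, hF1, U, hU, hF2⟩ := F.2
  refine ⟨⟨PhiVal_add_f k G V W K F, PhiVal_smul_f k G V W K F⟩, U, hU, ?_⟩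
  intro g hg
  funext f
  have h : ((F : ↥(IndSmoothHom k G V W K)) : G → V → W) = fun x => (F : G → V → W) (x * g) := by
    funext x
    exact (hF2 x g hg).symm
  exact (PhiVal_translate k G V W K F F g h f).symm

/-! ### The inverse construction -/

open scoped Classical in
noncomputable def deltaFun (g : G) (v : V) : G → V := fun x =>
  if h : x * g⁻¹ ∈ K then (⟨x * g⁻¹, h⟩ : ↥K) • v else 0

lemma deltaFun_kmul (g : G) (v : V) (κ : ↥K) (x : G) :
    deltaFun G V K g v ((κ : G) * x) = κ • deltaFun G V K g v x := by
  simp only [deltaFun]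
  by_cases h : x * g⁻¹ ∈ K
  · have h2 : (κ : G) * x * g⁻¹ ∈ K := by
      have := K.mul_mem κ.2 h
      rwa [← mul_assoc] at this
    rw [dif_pos h2, dif_pos h, ← mul_smul]
    congr 1
    exact Subtype.ext (by simp [mul_assoc])
  · have h2 : ¬((κ : G) * x * g⁻¹ ∈ K) := by
      intro hc
      apply h
      have := K.mul_mem (K.inv_mem κ.2) hc
      simpa [mul_assoc] using this
    rw [dif_neg h2, dif_neg h, smul_zero]

lemma deltaFun_conj (g : G) (v : V) (κ : ↥K) :
    deltaFun G V K ((κ : G) * g) v = deltaFun G V K g (κ⁻¹ • v) := by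
  funext x
  simp only [deltaFun]
  by_cases h : x * g⁻¹ ∈ K
  · have h2 : x * ((κ : G) * g)⁻¹ ∈ K := by
      rw [mul_inv_rev, ← mul_assoc]
      exact K.mul_mem h (K.inv_mem κ.2)
    rw [dif_pos h2, dif_pos h, ← mul_smul]
    congr 1
    apply Subtype.ext
    show x * ((κ : G) * g)⁻¹ = x * g⁻¹ * ((κ⁻¹ : ↥K) : G)
    simp [mul_inv_rev, mul_assoc]
  · have h2 : ¬(x * ((κ : G) * g)⁻¹ ∈ K) := by
      intro hc
      apply h
      rw [mul_inv_rev, ← mul_assoc] at hc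
      have := K.mul_mem hc κ.2
      simpa [mul_assoc] using this
    rw [dif_neg h2, dif_neg h]

lemma deltaFun_self (g : G) (v : V) : deltaFun G V K g v g = v := by
  have h : g * g⁻¹ ∈ K := by rw [mul_inv_cancel]; exact K.one_mem
  simp only [deltaFun]
  rw [dif_pos h]
  have : (⟨g * g⁻¹, h⟩ : ↥K) = 1 := Subtype.ext (by simp)
  rw [this, one_smul]

lemma deltaFun_notin {g x : G} (h : x * g⁻¹ ∉ K) (v : V) : deltaFun G V K g v x = 0 := by
  simp only [deltaFun]
  rw [dif_neg h]

lemma deltaFun_add (g : G) (v v' : V) :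
    deltaFun G V K g (v + v') = deltaFun G V K g v + deltaFun G V K g v' := by
  funext x
  simp only [deltaFun, Pi.add_apply]
  split_ifs with h
  · rw [smul_add]
  · rw [add_zero]

lemma deltaFun_smul (g : G) (c : k) (v : V) :
    deltaFun G V K g (c • v) = c • deltaFun G V K g v := by
  funext x
  simp only [deltaFun, Pi.smul_apply]
  split_ifs with h
  · exact smul_comm _ c v
  · rw [smul_zero]

lemma deltaFun_zero (g : G) : deltaFun G V K g (0 : V) = 0 := by
  funext x
  simp only [deltaFun, Pi.zero_apply]
  split_ifs with h
  · rw [smul_zero]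
  · rfl

lemma deltaFun_rt (g h : G) (v : V) :
    (fun x => deltaFun G V K g v (x * h)) = deltaFun G V K (g * h⁻¹) v := by
  funext x
  have e : x * (g * h⁻¹)⁻¹ = x * h * g⁻¹ := by group
  by_cases hc : x * h * g⁻¹ ∈ K
  · have hc2 : x * (g * h⁻¹)⁻¹ ∈ K := by rwa [e]
    show deltaFun G V K g v (x * h) = _
    simp only [deltaFun]
    rw [dif_pos hc, dif_pos hc2]
    congr 1
    exact Subtype.ext e.symm
  · have hc2 : x * (g * h⁻¹)⁻¹ ∉ K := by rwa [e]
    show deltaFun G V K g v (x * h) = _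
    rw [deltaFun_notin G V K hc, deltaFun_notin G V K hc2]

lemma conj_isOpen (U : Subgroup G) (hU : IsOpen (U : Set G)) (g : G) :
    IsOpen ((U.map (MulAut.conj g).toMonoidHom : Subgroup G) : Set G) := by
  have h : ((U.map (MulAut.conj g).toMonoidHom : Subgroup G) : Set G) =
      (fun x => g * x * g⁻¹) '' (U : Set G) := by
    ext x; simp [MulAut.conj_apply]
  rw [h]
  have hmap : IsOpenMap (fun x : G => g * x * g⁻¹) := by
    have h1 : IsOpenMap (fun x : G => x * g⁻¹) := (Homeomorph.mulRight g⁻¹).isOpenMap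
    have h2 : IsOpenMap (fun x : G => g * x) := (Homeomorph.mulLeft g).isOpenMap
    have := h2.comp h1
    convert this using 1
    funext x
    simp [mul_assoc]
  exact hmap _ hU

lemma mapK_isOpen (hKopen : IsOpen (K : Set G)) (U : Subgroup ↥K) (hU : IsOpen (U : Set ↥K)) :
    IsOpen ((U.map K.subtype : Subgroup G) : Set G) := by
  have h : ((U.map K.subtype : Subgroup G) : Set G) = (Subtype.val : ↥K → G) '' (U : Set ↥K) := by
    ext x
    simp [Subgroup.mem_map]
  rw [h]
  exact hKopen.isOpenMap_subtype_val _ hU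

noncomputable def deltaElt (hKopen : IsOpen (K : Set G)) (hV : SmoothAct ↥K V) (g : G) (v : V) :
    ↥(CompactIndK k G V K) :=
  ⟨deltaFun G V K g v, by
    refine ⟨fun κ x => deltaFun_kmul G V K g v κ x, ?_, {g}, fun x hx => ?_⟩
    · obtain ⟨U, hUopen, hUfix⟩ := hV v
      refine ⟨(U.map K.subtype).map (MulAut.conj g⁻¹).toMonoidHom,
        conj_isOpen G (U.map K.subtype) (mapK_isOpen G K hKopen U hUopen) g⁻¹, ?_⟩
      rintro x u hu
      rcases Subgroup.mem_map.mp hu with ⟨u₁, hu₁, rfl⟩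
      rcases Subgroup.mem_map.mp hu₁ with ⟨u₀, hu₀, rfl⟩
      have e1 : deltaFun G V K g v (x * (MulAut.conj g⁻¹).toMonoidHom (K.subtype u₀))
          = deltaFun G V K (g * ((MulAut.conj g⁻¹).toMonoidHom (K.subtype u₀))⁻¹) v x :=
        congrFun (deltaFun_rt G V K g _ v) x
      rw [e1]
      have e2 : g * ((MulAut.conj g⁻¹).toMonoidHom (K.subtype u₀))⁻¹ = ((u₀⁻¹ : ↥K) : G) * g := by
        show g * (g⁻¹ * (u₀ : G) * g⁻¹⁻¹)⁻¹ = ((u₀ : G))⁻¹ * g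
        group
      rw [e2, deltaFun_conj, inv_inv, hUfix u₀ hu₀]
    · have hxg : x * g⁻¹ ∈ K := by
        by_contra hc
        exact hx (deltaFun_notin G V K hc v)
      exact ⟨g, Finset.mem_singleton_self g, x * g⁻¹, hxg, by group⟩⟩

lemma deltaElt_coe (hKopen : IsOpen (K : Set G)) (hV : SmoothAct ↥K V) (g : G) (v : V) :
    ((deltaElt k G V K hKopen hV g v : ↥(CompactIndK k G V K)) : G → V) = deltaFun G V K g v :=
  rfl

lemma rtK_delta (hKopen : IsOpen (K : Set G)) (hV : SmoothAct ↥K V) (g h : G) (v : V) :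
    rtK k G V K h (deltaElt k G V K hKopen hV g v) = deltaElt k G V K hKopen hV (g * h⁻¹) v :=
  Subtype.ext (by rw [rtK_coe, deltaElt_coe, deltaElt_coe]; exact deltaFun_rt G V K g h v)

noncomputable def PsiFun (hKopen : IsOpen (K : Set G)) (hV : SmoothAct ↥K V)
    (φ : ↥(CompactIndK k G V K) → W) (g : G) (v : V) : W :=
  g • φ (deltaElt k G V K hKopen hV g v)

lemma SmoothHomInd.key {φ : ↥(CompactIndK k G V K) → W} {U : Subgroup G}
    (hUinv : ∀ u ∈ U, indAct k G V W K u φ = φ) {u : G} (hu : u ∈ U)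
    (f : ↥(CompactIndK k G V K)) : φ (rtK k G V K u⁻¹ f) = u⁻¹ • φ f := by
  have h2 : u • φ (rtK k G V K u⁻¹ f) = φ f := congrFun (hUinv u hu) f
  rw [← h2, inv_smul_smul]

lemma PsiFun_mem (hKopen : IsOpen (K : Set G)) (hV : SmoothAct ↥K V)
    {φ : ↥(CompactIndK k G V K) → W} (hφ : φ ∈ SmoothHomInd k G V W K) :
    PsiFun k G V W K hKopen hV φ ∈ IndSmoothHom k G V W K := by
  obtain ⟨hlin, U, hUopen, hUinv⟩ := hφ
  refine ⟨?_, ?_, U, hUopen, ?_⟩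
  · -- each value is in SmoothHom
    intro g
    refine ⟨⟨?_, ?_⟩, U.map (MulAut.conj g).toMonoidHom, conj_isOpen G U hUopen g, ?_⟩
    · intro v v'
      show g • φ (deltaElt k G V K hKopen hV g (v + v')) = _
      have e : deltaElt k G V K hKopen hV g (v + v')
          = deltaElt k G V K hKopen hV g v + deltaElt k G V K hKopen hV g v' :=
        Subtype.ext (by
          rw [deltaElt_coe]
          show deltaFun G V K g (v + v')
            = (deltaElt k G V K hKopen hV g v : G → V) + (deltaElt k G V K hKopen hV g v' : G → V)
          rw [deltaElt_coe, deltaElt_coe]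
          exact deltaFun_add G V K g v v')
      rw [e, hlin.map_add, smul_add]
      rfl
    · intro c v
      show g • φ (deltaElt k G V K hKopen hV g (c • v)) = c • (g • φ (deltaElt k G V K hKopen hV g v))
      have e : deltaElt k G V K hKopen hV g (c • v) = c • deltaElt k G V K hKopen hV g v :=
        Subtype.ext (by
          rw [deltaElt_coe]
          show deltaFun G V K g (c • v) = c • (deltaElt k G V K hKopen hV g v : G → V)
          rw [deltaElt_coe]
          exact deltaFun_smul k G V K g c v)
      rw [e, hlin.map_smul]
      exact smul_comm g c _
    · intro κ hκ
      rcases Subgroup.mem_map.mp hκ with ⟨u, hu, he⟩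
      -- he : (MulAut.conj g) u = ↑κ, i.e. ↑κ = g * u * g⁻¹
      funext v
      show (κ : G) • PsiFun k G V W K hKopen hV φ g (κ⁻¹ • v) = PsiFun k G V W K hKopen hV φ g v
      have e1 : deltaElt k G V K hKopen hV g (κ⁻¹ • v)
          = rtK k G V K u⁻¹ (deltaElt k G V K hKopen hV g v) := by
        rw [rtK_delta, inv_inv]
        apply Subtype.ext
        rw [deltaElt_coe, deltaElt_coe, ← deltaFun_conj]
        congr 1
        have : ((κ : G)) = g * u * g⁻¹ := by rw [← he]; rfl
        rw [this]
        group
      show (κ : G) • (g • φ (deltaElt k G V K hKopen hV g (κ⁻¹ • v))) = g • φ (deltaElt k G V K hKopen hV g v)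
      rw [e1, SmoothHomInd.key k G V W K hUinv hu, ← mul_smul, ← mul_smul]
      congr 1
      have : ((κ : G)) = g * u * g⁻¹ := by rw [← he]; rfl
      rw [this]
      group
  · -- K-equivariance
    intro κ g
    funext v
    show ((κ : G) * g) • φ (deltaElt k G V K hKopen hV ((κ : G) * g) v)
        = (κ : G) • ((g : G) • φ (deltaElt k G V K hKopen hV g (κ⁻¹ • v)))
    have e : deltaElt k G V K hKopen hV ((κ : G) * g) v = deltaElt k G V K hKopen hV g (κ⁻¹ • v) :=
      Subtype.ext (by rw [deltaElt_coe, deltaElt_coe]; exact deltaFun_conj G V K g v κ)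
    rw [e, mul_smul]
  · -- right invariance
    intro g u hu
    funext v
    show (g * u) • φ (deltaElt k G V K hKopen hV (g * u) v) = g • φ (deltaElt k G V K hKopen hV g v)
    have e : deltaElt k G V K hKopen hV (g * u) v
        = rtK k G V K u⁻¹ (deltaElt k G V K hKopen hV g v) := by
      rw [rtK_delta, inv_inv]
    rw [e, SmoothHomInd.key k G V W K hUinv hu, ← mul_smul, mul_inv_cancel_right]

noncomputable def PsiElt (hKopen : IsOpen (K : Set G)) (hV : SmoothAct ↥K V)
    (φ : ↥(SmoothHomInd k G V W K)) : ↥(IndSmoothHom k G V W K) :=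
  ⟨PsiFun k G V W K hKopen hV (φ : ↥(CompactIndK k G V K) → W),
    PsiFun_mem k G V W K hKopen hV φ.2⟩

lemma Psi_Phi (hKopen : IsOpen (K : Set G)) (hV : SmoothAct ↥K V)
    (F : ↥(IndSmoothHom k G V W K)) :
    PsiElt k G V W K hKopen hV ⟨PhiVal k G V W K F, PhiVal_mem k G V W K F⟩ = F := by
  apply Subtype.ext
  funext g v
  show g • PhiVal k G V W K F (deltaElt k G V K hKopen hV g v) = (F : G → V → W) g v
  set δ := deltaElt k G V K hKopen hV g v with hδ
  have hsingle : PhiVal k G V W K F δ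
      = Tbar G V W K (F : G → V → W) (δ : G → V) (mkQ G K g) := by
    apply finsum_eq_single
    intro q hq
    have hnot : q.out * g⁻¹ ∉ K := out_notin_of_ne G K hq
    show q.out⁻¹ • (F : G → V → W) q.out ((δ : G → V) q.out) = 0
    rw [hδ, deltaElt_coe, deltaFun_notin G V K hnot,
      (IndSmooth.lin k G V W K F.2 q.out).map_zero, smul_zero]
  rw [hsingle, Tbar_mk G V W K _ _ (IndSmooth.equiv k G V W K F.2) (CompInd.equiv k G V K δ.2)]
  rw [hδ, deltaElt_coe, deltaFun_self, ← mul_smul]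
  simp

lemma Phi_Psi (hKopen : IsOpen (K : Set G)) (hV : SmoothAct ↥K V)
    (φ : ↥(SmoothHomInd k G V W K)) (f : ↥(CompactIndK k G V K)) :
    PhiVal k G V W K (PsiElt k G V W K hKopen hV φ) f
      = (φ : ↥(CompactIndK k G V K) → W) f := by
  classical
  obtain ⟨hlin, Uφ, hUφ, hUinv⟩ := φ.2
  set Fam : QuotK G K → ↥(CompactIndK k G V K) :=
    fun q => deltaElt k G V K hKopen hV q.out ((f : G → V) q.out) with hFam
  have hFamfin : (Function.support Fam).Finite := by
    obtain ⟨S, hS⟩ := CompInd.supp k G V K f.2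
    apply Set.Finite.subset (S.finite_toSet.image (mkQ G K))
    intro q hq
    have hfq : (f : G → V) q.out ≠ 0 := by
      intro h
      apply hq
      rw [hFam]
      show deltaElt k G V K hKopen hV q.out ((f : G → V) q.out) = 0
      rw [h]
      exact Subtype.ext (by rw [deltaElt_coe]; exact deltaFun_zero G V K q.out)
    obtain ⟨s, hs, κ, hκ, he⟩ := hS q.out hfq
    refine ⟨s, hs, (mkQ_eq_of_mem G K ?_).trans (mkQ_out G K q)⟩
    rw [he]
    simpa using hκ
  have h1 : ∀ q, Tbar G V W K ((PsiElt k G V W K hKopen hV φ : ↥(IndSmoothHom k G V W K))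
      : G → V → W) (f : G → V) q = (φ : ↥(CompactIndK k G V K) → W) (Fam q) := by
    intro q
    show q.out⁻¹ • (q.out • (φ : ↥(CompactIndK k G V K) → W)
      (deltaElt k G V K hKopen hV q.out ((f : G → V) q.out))) = _
    rw [inv_smul_smul]
  have hsum : (∑ᶠ q, Fam q) = f := by
    have hFamfin2 : (Function.support (fun q => ((Fam q : ↥(CompactIndK k G V K)) : G → V))).Finite := by
      apply Set.Finite.subset hFamfin
      intro q hq
      have hq' : ((Fam q : ↥(CompactIndK k G V K)) : G → V) ≠ 0 := hq
      show Fam q ≠ 0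
      intro h0
      apply hq'
      rw [h0]
      rfl
    apply Subtype.ext
    have hcoe : ((∑ᶠ q, Fam q : ↥(CompactIndK k G V K)) : G → V)
        = ∑ᶠ q, ((Fam q : ↥(CompactIndK k G V K)) : G → V) :=
      AddMonoidHom.map_finsum ((CompactIndK k G V K).subtype.toAddMonoidHom) hFamfin
    rw [hcoe]
    funext x
    have hev : (∑ᶠ q, ((Fam q : ↥(CompactIndK k G V K)) : G → V)) x
        = ∑ᶠ q, ((Fam q : ↥(CompactIndK k G V K)) : G → V) x :=
      AddMonoidHom.map_finsum (Pi.evalAddMonoidHom (fun _ : G => V) x) hFamfin2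
    rw [hev]
    have hpt : (∑ᶠ q, ((Fam q : ↥(CompactIndK k G V K)) : G → V) x)
        = ((Fam (mkQ G K x) : ↥(CompactIndK k G V K)) : G → V) x := by
      apply finsum_eq_single
      intro q hq
      have hnot : x * q.out⁻¹ ∉ K := notin_of_ne G K hq
      rw [hFam]
      show deltaFun G V K q.out ((f : G → V) q.out) x = 0
      exact deltaFun_notin G V K hnot _
    rw [hpt, hFam]
    show deltaFun G V K (mkQ G K x).out ((f : G → V) (mkQ G K x).out) x = (f : G → V) x
    have hrel := mkQ_rel G K x
    set o := (mkQ G K x).out with ho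
    set κ : ↥K := ⟨x * o⁻¹, hrel⟩ with hκ
    have hx : (κ : G) * o = x := by
      show x * o⁻¹ * o = x
      group
    simp only [deltaFun]
    rw [dif_pos hrel]
    have : (f : G → V) x = κ • (f : G → V) o := by
      rw [← hx]
      exact CompInd.equiv k G V K f.2 κ o
    rw [this]
  calc PhiVal k G V W K (PsiElt k G V W K hKopen hV φ) f
      = ∑ᶠ q, (φ : ↥(CompactIndK k G V K) → W) (Fam q) := finsum_congr h1
    _ = (φ : ↥(CompactIndK k G V K) → W) (∑ᶠ q, Fam q) :=
        (AddMonoidHom.map_finsum (AddMonoidHom.mk' (φ : ↥(CompactIndK k G V K) → W)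
          hlin.map_add) hFamfin).symm
    _ = (φ : ↥(CompactIndK k G V K) → W) f := by rw [hsum]

end IsoAux


theorem statement2 (k G V W : Type) [Field k] [Group G] [TopologicalSpace G]
    [IsTopologicalGroup G] [LocallyCompactSpace G] [TotallyDisconnectedSpace G] [T2Space G]
    [AddCommGroup V] [Module k V] [AddCommGroup W] [Module k W]
    (K : Subgroup G) [DistribMulAction ↥K V] [SMulCommClass ↥K k V]
    [DistribMulAction G W] [SMulCommClass G k W]
    (hKopen : IsOpen (K : Set G)) (hKcomp : IsCompact (K : Set G))
    (hV : SmoothAct ↥K V) (hW : SmoothAct G W) :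
    ∃ E : ↥(IndSmoothHom k G V W K) ≃ₗ[k] ↥(SmoothHomInd k G V W K),
      -- `E` is `G`-equivariant, where `G` acts on `Ind_K^G(Hom_sm(V,W|_K))` by right
      -- translation and on `Hom_sm(ind_K^G V, W)` by `(g ⋅ φ)(f) = g • φ(g⁻¹ ⋅ f)`:
      ∀ (g : G) (F F' : ↥(IndSmoothHom k G V W K)),
        (F' : G → (V → W)) = (fun h => (F : G → (V → W)) (h * g)) →
        ((E F' : ↥(SmoothHomInd k G V W K)) : ↥(CompactIndK k G V K) → W) =
          indAct k G V W K g ((E F : ↥(SmoothHomInd k G V W K)) :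
            ↥(CompactIndK k G V K) → W) := by
  classical
  refine ⟨{ toFun := fun F => ⟨PhiVal k G V W K F, PhiVal_mem k G V W K F⟩,
            map_add' := fun F F' => Subtype.ext (funext fun f => PhiVal_add_F k G V W K F F' f),
            map_smul' := fun c F => Subtype.ext (funext fun f => PhiVal_smul_F k G V W K c F f),
            invFun := PsiElt k G V W K hKopen hV,
            left_inv := fun F => Psi_Phi k G V W K hKopen hV F,
            right_inv := fun φ => Subtype.ext (funext fun f => Phi_Psi k G V W K hKopen hV φ f) },
    ?_⟩
  intro g F F' hc
  funext f
  exact PhiVal_translate k G V W K F F' g hc f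
end
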